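/- Under the hypotheses of the orthogonal embedding construction (g (ξ,ζ)-smooth, twice differentiable, U^{(i)} with mutually orthogonal orthonormal rows, ḡ_i(x) = √n·g(U^{(i)}x)), the average Ḡ(x) := (1/n)∑_{i=1}^n ḡ_i(x) is (ξ/√n, ζ)-smooth on ℝ^{mn}. -/

import Mathlib

open scoped RealInnerProductSpace BigOperators

lemma inner_gradient_of_hasFDerivAt {F : Type*} [NormedAddCommGroup F]
    [InnerProductSpace ℝ F] [CompleteSpace F] {f : F → ℝ} {D : F →L[ℝ] ℝ} {y : F}
    (h : HasFDerivAt f D y) (v : F) : ⟪gradient f y, v⟫ = D v := by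
  rw [gradient, h.fderiv]; exact InnerProductSpace.toDual_symm_apply

lemma oe_parseval {m n : ℕ} (hn : 0 < n) (hm : 0 < m)
    (u : Fin n → Fin m → EuclideanSpace ℝ (Fin (m * n)))
    (hU : ∀ (i j : Fin n) (a b : Fin m),
      ⟪u i a, u j b⟫ = if i = j ∧ a = b then (1 : ℝ) else 0)
    (z : EuclideanSpace ℝ (Fin (m * n))) :
    ∑ i : Fin n, ∑ a : Fin m, ⟪u i a, z⟫ ^ 2 = ‖z‖ ^ 2 := by
  have hv : Orthonormal ℝ (fun p : Fin n × Fin m => u p.1 p.2) := by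
    rw [orthonormal_iff_ite]
    intro p q
    rw [hU]
    simp [Prod.ext_iff]
  have : Nonempty (Fin n × Fin m) := ⟨⟨⟨0, hn⟩, ⟨0, hm⟩⟩⟩
  let b := (basisOfOrthonormalOfCardEqFinrank hv (by simp [mul_comm])).toOrthonormalBasis
    (by rwa [coe_basisOfOrthonormalOfCardEqFinrank])
  have hb : ∀ p, b p = u p.1 p.2 := by
    intro p
    simp [b, Module.Basis.coe_toOrthonormalBasis, coe_basisOfOrthonormalOfCardEqFinrank]
  calc ∑ i : Fin n, ∑ a : Fin m, ⟪u i a, z⟫ ^ 2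
      = ∑ p : Fin n × Fin m, ⟪z, b p⟫ * ⟪b p, z⟫ := by
        rw [Fintype.sum_prod_type]
        exact Finset.sum_congr rfl fun i _ => Finset.sum_congr rfl fun a _ => by
          rw [hb ⟨i, a⟩, real_inner_comm z, sq]
    _ = ⟪z, z⟫ := b.sum_inner_mul_inner z z
    _ = ‖z‖ ^ 2 := real_inner_self_eq_norm_sq z

lemma eucl_norm_sq {m : ℕ} (w : EuclideanSpace ℝ (Fin m)) : ‖w‖ ^ 2 = ∑ a, (w a) ^ 2 := by
  rw [← real_inner_self_eq_norm_sq]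
  rw [PiLp.inner_apply]; simp [sq]

theorem orthogonal_embedding_average_function_smooth (m n : ℕ) (hn : 0 < n) (ξ ζ : ℝ)
    (hξζ : |ξ| ≤ ζ)
    (g : EuclideanSpace ℝ (Fin m) → ℝ) (hg : ContDiff ℝ 2 g)
    (hsmooth : ∀ x y : EuclideanSpace ℝ (Fin m),
      ξ / 2 * ‖x - y‖ ^ 2 ≤ g x - g y - ⟪gradient g y, x - y⟫ ∧
        g x - g y - ⟪gradient g y, x - y⟫ ≤ ζ / 2 * ‖x - y‖ ^ 2)
    (u : Fin n → Fin m → EuclideanSpace ℝ (Fin (m * n)))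
    (hU : ∀ (i j : Fin n) (a b : Fin m),
      ⟪u i a, u j b⟫ = if i = j ∧ a = b then (1 : ℝ) else 0)
    (x y : EuclideanSpace ℝ (Fin (m * n))) :
    ξ / Real.sqrt n / 2 * ‖x - y‖ ^ 2 ≤
        ((1 / (n : ℝ)) * ∑ i : Fin n,
            Real.sqrt n * g (WithLp.toLp 2 (fun a => ⟪u i a, x⟫) : EuclideanSpace ℝ (Fin m)))
          - ((1 / (n : ℝ)) * ∑ i : Fin n,
            Real.sqrt n * g (WithLp.toLp 2 (fun a => ⟪u i a, y⟫) : EuclideanSpace ℝ (Fin m)))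
          - ⟪gradient (fun z : EuclideanSpace ℝ (Fin (m * n)) =>
              (1 / (n : ℝ)) * ∑ i : Fin n,
                Real.sqrt n * g (WithLp.toLp 2 (fun a => ⟪u i a, z⟫) : EuclideanSpace ℝ (Fin m))) y,
            x - y⟫ ∧
      ((1 / (n : ℝ)) * ∑ i : Fin n,
            Real.sqrt n * g (WithLp.toLp 2 (fun a => ⟪u i a, x⟫) : EuclideanSpace ℝ (Fin m)))
          - ((1 / (n : ℝ)) * ∑ i : Fin n,
            Real.sqrt n * g (WithLp.toLp 2 (fun a => ⟪u i a, y⟫) : EuclideanSpace ℝ (Fin m)))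
          - ⟪gradient (fun z : EuclideanSpace ℝ (Fin (m * n)) =>
              (1 / (n : ℝ)) * ∑ i : Fin n,
                Real.sqrt n * g (WithLp.toLp 2 (fun a => ⟪u i a, z⟫) : EuclideanSpace ℝ (Fin m))) y,
            x - y⟫ ≤ ζ / 2 * ‖x - y‖ ^ 2 := by
  classical
  have hζ : 0 ≤ ζ := le_trans (abs_nonneg ξ) hξζ
  -- helpful numeric facts
  have hn1 : (1 : ℝ) ≤ n := by exact_mod_cast hn
  have hsn : (1 : ℝ) ≤ Real.sqrt n := by
    rw [show (1:ℝ) = Real.sqrt 1 by simp]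
    exact Real.sqrt_le_sqrt hn1
  have hsnpos : (0 : ℝ) < Real.sqrt n := lt_of_lt_of_le one_pos hsn
  have hnn : (Real.sqrt n) * (Real.sqrt n) = n := Real.mul_self_sqrt (by positivity)
  rcases Nat.eq_zero_or_pos m with hm | hm
  · -- degenerate case: the whole space is trivial
    subst hm
    have hxy : x = y := PiLp.ext fun (a : Fin (0 * n)) => absurd a.isLt (by omega)
    subst hxy
    simp
  -- main case
  set P : Fin n → (EuclideanSpace ℝ (Fin (m * n)) →L[ℝ] EuclideanSpace ℝ (Fin m)) :=
    fun i => LinearMap.toContinuousLinearMap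
      { toFun := fun z => (WithLp.toLp 2 (fun a => ⟪u i a, z⟫) : EuclideanSpace ℝ (Fin m))
        map_add' := fun z w => by ext a; simp [inner_add_right]
        map_smul' := fun c z => by
          ext a; simp [inner_smul_right] } with hPdef
  have hP : ∀ i z, P i z = (WithLp.toLp 2 (fun a => ⟪u i a, z⟫) : EuclideanSpace ℝ (Fin m)) := fun _ _ => rfl
  have hgdiff : Differentiable ℝ g := hg.differentiable (by norm_num)
  -- derivative of the average function at y
  set D : EuclideanSpace ℝ (Fin (m * n)) →L[ℝ] ℝ :=
    (1 / (n : ℝ)) • ∑ i : Fin n, (Real.sqrt n) • ((fderiv ℝ g (P i y)).comp (P i)) with hDdef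
  have hD : HasFDerivAt (fun z : EuclideanSpace ℝ (Fin (m * n)) =>
      (1 / (n : ℝ)) * ∑ i : Fin n,
        Real.sqrt n * g (WithLp.toLp 2 (fun a => ⟪u i a, z⟫) : EuclideanSpace ℝ (Fin m))) D y := by
    have h1 : ∀ i : Fin n, HasFDerivAt (fun z => g (P i z))
        ((fderiv ℝ g (P i y)).comp (P i)) y :=
      fun i => ((hgdiff (P i y)).hasFDerivAt).comp y ((P i).hasFDerivAt)
    have h2 : HasFDerivAt (fun z => ∑ i : Fin n, Real.sqrt n * g (P i z))
        (∑ i : Fin n, (Real.sqrt n) • ((fderiv ℝ g (P i y)).comp (P i))) y :=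
      HasFDerivAt.fun_sum (fun i _ => (h1 i).const_mul _)
    exact h2.const_mul _
  -- gradient pairing
  have hgradinner : ⟪gradient (fun z : EuclideanSpace ℝ (Fin (m * n)) =>
      (1 / (n : ℝ)) * ∑ i : Fin n,
        Real.sqrt n * g (WithLp.toLp 2 (fun a => ⟪u i a, z⟫) : EuclideanSpace ℝ (Fin m))) y, x - y⟫
      = (1 / (n : ℝ)) * ∑ i : Fin n, Real.sqrt n * (fderiv ℝ g (P i y) (P i (x - y))) := by
    rw [inner_gradient_of_hasFDerivAt hD]
    simp [hDdef, ContinuousLinearMap.sum_apply]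
  have hginner : ∀ (w v : EuclideanSpace ℝ (Fin m)),
      ⟪gradient g w, v⟫ = fderiv ℝ g w v :=
    fun w v => inner_gradient_of_hasFDerivAt (hgdiff w).hasFDerivAt v
  -- per-term bounds
  set T : Fin n → ℝ := fun i => g (P i x) - g (P i y) - fderiv ℝ g (P i y) (P i (x - y))
    with hTdef
  have hTbound : ∀ i : Fin n,
      ξ / 2 * ‖P i (x - y)‖ ^ 2 ≤ T i ∧ T i ≤ ζ / 2 * ‖P i (x - y)‖ ^ 2 := by
    intro i
    have := hsmooth (P i x) (P i y)
    rw [hginner] at this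
    have hsub : P i x - P i y = P i (x - y) := (map_sub (P i) x y).symm
    rw [hsub] at this
    exact this
  -- Parseval
  have hpars : ∑ i : Fin n, ‖P i (x - y)‖ ^ 2 = ‖x - y‖ ^ 2 := by
    rw [← oe_parseval hn hm u hU (x - y)]
    exact Finset.sum_congr rfl fun i _ => by
      rw [eucl_norm_sq]; rfl
  -- rewrite the main expression
  have hmain : ((1 / (n : ℝ)) * ∑ i : Fin n,
            Real.sqrt n * g (WithLp.toLp 2 (fun a => ⟪u i a, x⟫) : EuclideanSpace ℝ (Fin m)))
          - ((1 / (n : ℝ)) * ∑ i : Fin n,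
            Real.sqrt n * g (WithLp.toLp 2 (fun a => ⟪u i a, y⟫) : EuclideanSpace ℝ (Fin m)))
          - ⟪gradient (fun z : EuclideanSpace ℝ (Fin (m * n)) =>
              (1 / (n : ℝ)) * ∑ i : Fin n,
                Real.sqrt n * g (WithLp.toLp 2 (fun a => ⟪u i a, z⟫) : EuclideanSpace ℝ (Fin m))) y,
            x - y⟫
        = (1 / (n : ℝ)) * ∑ i : Fin n, Real.sqrt n * T i := by
    rw [hgradinner]
    rw [← mul_sub, ← mul_sub, ← Finset.sum_sub_distrib, ← Finset.sum_sub_distrib]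
    congr 1
    exact Finset.sum_congr rfl fun i _ => by rw [hTdef, ← mul_sub, ← mul_sub]; rfl
  rw [hmain]
  have hc : (0:ℝ) ≤ (1 / (n : ℝ)) * Real.sqrt n := by positivity
  have hsum_eq : (1 / (n : ℝ)) * ∑ i : Fin n, Real.sqrt n * T i
      = ((1 / (n : ℝ)) * Real.sqrt n) * ∑ i : Fin n, T i := by
    rw [← Finset.mul_sum, ← mul_assoc]
  have hinv : (1 / (n : ℝ)) * Real.sqrt n = 1 / Real.sqrt n := by
    rw [← hnn]; field_simp; rw [Real.sqrt_sq hsnpos.le]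
  constructor
  · -- lower bound
    have h1 : ξ / 2 * ‖x - y‖ ^ 2 ≤ ∑ i : Fin n, T i := by
      calc ξ / 2 * ‖x - y‖ ^ 2 = ∑ i : Fin n, ξ / 2 * ‖P i (x - y)‖ ^ 2 := by
            rw [← Finset.mul_sum, hpars]
        _ ≤ ∑ i : Fin n, T i := Finset.sum_le_sum fun i _ => (hTbound i).1
    calc ξ / Real.sqrt n / 2 * ‖x - y‖ ^ 2
        = ((1 / (n : ℝ)) * Real.sqrt n) * (ξ / 2 * ‖x - y‖ ^ 2) := by
          rw [hinv]
          field_simp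
      _ ≤ ((1 / (n : ℝ)) * Real.sqrt n) * ∑ i : Fin n, T i := by
          exact mul_le_mul_of_nonneg_left h1 hc
      _ = (1 / (n : ℝ)) * ∑ i : Fin n, Real.sqrt n * T i := hsum_eq.symm
  · -- upper bound
    have h1 : ∑ i : Fin n, T i ≤ ζ / 2 * ‖x - y‖ ^ 2 := by
      calc ∑ i : Fin n, T i ≤ ∑ i : Fin n, ζ / 2 * ‖P i (x - y)‖ ^ 2 :=
            Finset.sum_le_sum fun i _ => (hTbound i).2
        _ = ζ / 2 * ‖x - y‖ ^ 2 := by rw [← Finset.mul_sum, hpars]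
    calc (1 / (n : ℝ)) * ∑ i : Fin n, Real.sqrt n * T i
        = ((1 / (n : ℝ)) * Real.sqrt n) * ∑ i : Fin n, T i := hsum_eq
      _ ≤ ((1 / (n : ℝ)) * Real.sqrt n) * (ζ / 2 * ‖x - y‖ ^ 2) :=
          mul_le_mul_of_nonneg_left h1 hc
      _ ≤ 1 * (ζ / 2 * ‖x - y‖ ^ 2) := by
          apply mul_le_mul_of_nonneg_right _ (by positivity)
          rw [hinv, div_le_one hsnpos]
          exact hsn
      _ = ζ / 2 * ‖x - y‖ ^ 2 := one_mul _
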